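/- arXiv:2006.16602 — 3 statements merged into one kernel-verified Lean document; each statement's English description precedes it below -/
import Mathlib

section
/- Let M be a metric space, f : M → M a homeomorphism, and (K, j, h) a weak Denjoy sub-system for f. Let a, b ∈ K be the two endpoints of a connected component of 𝕋 \ K, and set x₁ = j(a), x₀ = j(b), so that {x₁, x₀} is a gap of (K, j, h). Then for every ε > 0 there exists δ > 0 such that for every weak Denjoy sub-system (K₁, j₁, h₁) for f satisfying: the Hausdorff distance between j₁(K₁) and j(K) is less than δ, and the Hausdorff distance (in M³ with the sup-product metric) between G(K₁, j₁) and G(K, j) is less than δ or between G(K₁, j₁)⁻ and G(K, j) is less than δ, there exists a gap {z₁, z₀} of (K₁, j₁, h₁) with dist(z₁, x₁) < ε and dist(z₀, x₀) < ε. -/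
open Filter Topology Set

noncomputable section

/-- A Denjoy example: an orientation-preserving circle homeomorphism with
irrational rotation number together with its minimal invariant Cantor set. -/
structure DenjoySystem where
  /-- the circle homeomorphism -/
  h : UnitAddCircle ≃ₜ UnitAddCircle
  /-- the minimal set -/
  K : Set UnitAddCircle
  /-- a lift of `h` to `ℝ` -/
  lift : ℝ → ℝ
  lift_mono : StrictMono lift
  lift_cont : Continuous lift
  lift_bij : Function.Bijective lift
  lift_add : ∀ x : ℝ, lift (x + 1) = lift x + 1
  lift_proj : ∀ x : ℝ, ((lift x : ℝ) : UnitAddCircle) = h (x : UnitAddCircle)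
  /-- a representative of the rotation number -/
  rot : ℝ
  rot_lim : Filter.Tendsto (fun n : ℕ => lift^[n] 0 / (n : ℝ)) Filter.atTop (nhds rot)
  rot_irr : Irrational rot
  K_ne : K.Nonempty
  K_cpt : IsCompact K
  K_proper : K ≠ Set.univ
  K_inv : h '' K = K
  K_perf : Perfect K
  K_td : IsTotallyDisconnected K
  K_min : ∀ x ∈ K, ∀ y ∈ K, y ∈ closure {z | ∃ n : ℤ, (h.toEquiv ^ n) x = z}

/-- A weak Denjoy sub-system (WDS) for a map `f : M → M`. -/
structure WDS (M : Type*) [TopologicalSpace M] (f : M → M) extends DenjoySystem where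
  /-- the embedding of the minimal set into `M` -/
  j : K → M
  j_emb : Topology.IsEmbedding j
  range_inv : f '' Set.range j = Set.range j
  equivar : ∀ x y : K, h (x : UnitAddCircle) = (y : UnitAddCircle) → j y = f (j x)

/-- Weak cyclic order on the circle. -/
def CircBtw (a b c : UnitAddCircle) : Prop :=
  ∃ x y z : ℝ, (x : UnitAddCircle) = a ∧ (y : UnitAddCircle) = b ∧ (z : UnitAddCircle) = c ∧
    x ≤ y ∧ y ≤ z ∧ z ≤ x + 1

/-- The order graph of a WDS. -/
def WDS.orderGraph {M : Type*} [TopologicalSpace M] {f : M → M} (W : WDS M f) :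
    Set (M × M × M) :=
  {p | ∃ a b c : W.K, CircBtw (a : UnitAddCircle) (b : UnitAddCircle) (c : UnitAddCircle) ∧ p = (W.j a, W.j b, W.j c)}

/-- The reverse of the order graph of a WDS. -/
def WDS.revGraph {M : Type*} [TopologicalSpace M] {f : M → M} (W : WDS M f) :
    Set (M × M × M) :=
  {p | (p.2.2, p.2.1, p.1) ∈ W.orderGraph}



namespace GapPersist

lemma circ_eq_iff {x y : ℝ} : (x : UnitAddCircle) = (y : UnitAddCircle) ↔ ∃ n : ℤ, y = x + n := by
  constructor
  · intro h
    have := QuotientAddGroup.leftRel_apply.mp (Quotient.exact' h)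
    rw [AddSubgroup.mem_zmultiples_iff] at this
    obtain ⟨n, hn⟩ := this
    rw [zsmul_eq_mul, mul_one] at hn
    exact ⟨n, by linarith⟩
  · rintro ⟨n, rfl⟩
    refine (QuotientAddGroup.eq_iff_sub_mem ..).mpr ?_
    rw [AddSubgroup.mem_zmultiples_iff]
    exact ⟨-n, by rw [zsmul_eq_mul, mul_one]; push_cast; ring⟩

lemma circ_surj (A : UnitAddCircle) (s : ℝ) : ∃ t ∈ Ico s (s + 1), (t : UnitAddCircle) = A := by
  obtain ⟨r, rfl⟩ : ∃ r : ℝ, (r : UnitAddCircle) = A := Quotient.exists_rep A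
  refine ⟨r - ⌊r - s⌋, ⟨?_, ?_⟩, ?_⟩
  · have := Int.floor_le (r - s); linarith
  · have := Int.sub_one_lt_floor (r - s); linarith
  · exact circ_eq_iff.mpr ⟨⌊r - s⌋, by ring⟩

lemma circ_inj {x y : ℝ} (h : (x : UnitAddCircle) = (y : UnitAddCircle)) (h2 : |x - y| < 1) :
    x = y := by
  obtain ⟨n, rfl⟩ := circ_eq_iff.mp h
  rw [abs_lt] at h2
  have h3 : n = 0 := by
    have h4 : -1 < (n:ℝ) := by linarith [h2.1]
    have h5 : (n:ℝ) < 1 := by linarith [h2.2]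
    have h6 : -1 < n := by exact_mod_cast h4
    have h7 : n < 1 := by exact_mod_cast h5
    omega
  rw [h3]; push_cast; ring

lemma circ_ne {x y : ℝ} (h1 : 0 < y - x) (h2 : y - x < 1) :
    (x : UnitAddCircle) ≠ (y : UnitAddCircle) := by
  intro h
  have := circ_inj h (by rw [abs_lt]; constructor <;> linarith)
  linarith [this ▸ h1]

lemma pi_cont : Continuous (fun x : ℝ => (x : UnitAddCircle)) := AddCircle.continuous_mk' 1

lemma pi_open : IsOpenMap (fun x : ℝ => (x : UnitAddCircle)) :=
  QuotientAddGroup.isOpenMap_coe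

lemma arc_isOpen (u v : ℝ) : IsOpen ((fun x : ℝ => (x : UnitAddCircle)) '' Ioo u v) :=
  pi_open _ isOpen_Ioo

lemma arc_closure {u v : ℝ} (h : u < v) :
    closure ((fun x : ℝ => (x : UnitAddCircle)) '' Ioo u v)
      = (fun x : ℝ => (x : UnitAddCircle)) '' Icc u v := by
  apply Subset.antisymm
  · exact closure_minimal (image_mono Ioo_subset_Icc_self)
      (isCompact_Icc.image pi_cont).isClosed
  · rw [← closure_Ioo h.ne]
    exact image_closure_subset_closure_image pi_cont

lemma arc_not_mem_left {u v : ℝ} (h1 : u < v) (h2 : v < u + 1) :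
    (u : UnitAddCircle) ∉ (fun x : ℝ => (x : UnitAddCircle)) '' Ioo u v := by
  rintro ⟨t, ⟨ht1, ht2⟩, hteq⟩
  have := circ_inj hteq (by rw [abs_lt]; constructor <;> linarith)
  subst this; exact lt_irrefl _ ht1

lemma arc_not_mem_right {u v : ℝ} (h1 : u < v) (h2 : v < u + 1) :
    (v : UnitAddCircle) ∉ (fun x : ℝ => (x : UnitAddCircle)) '' Ioo u v := by
  rintro ⟨t, ⟨ht1, ht2⟩, hteq⟩
  have := circ_inj hteq (by rw [abs_lt]; constructor <;> linarith)
  subst this; exact lt_irrefl _ ht2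

lemma arc_frontier {u v : ℝ} (h1 : u < v) (h2 : v < u + 1) :
    frontier ((fun x : ℝ => (x : UnitAddCircle)) '' Ioo u v)
      = {(u : UnitAddCircle), (v : UnitAddCircle)} := by
  rw [frontier, arc_closure h1, (arc_isOpen u v).interior_eq]
  ext z
  constructor
  · rintro ⟨⟨t, ht, rfl⟩, hz⟩
    rcases eq_or_lt_of_le ht.1 with h | h
    · subst h; exact mem_insert _ _
    rcases eq_or_lt_of_le ht.2 with h' | h'
    · subst h'; exact mem_insert_of_mem _ rfl
    · exact absurd ⟨t, ⟨h, h'⟩, rfl⟩ hz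
  · rintro (rfl | rfl)
    · exact ⟨⟨u, ⟨le_refl _, h1.le⟩, rfl⟩, arc_not_mem_left h1 h2⟩
    · exact ⟨⟨v, ⟨h1.le, le_refl _⟩, rfl⟩, arc_not_mem_right h1 h2⟩

lemma preconn_subset {X : Type*} [TopologicalSpace X] {t s : Set X} (ht : IsPreconnected t)
    (hs : IsOpen s) (h1 : (t ∩ s).Nonempty) (h2 : ∀ x ∈ t, x ∉ frontier s) : t ⊆ s := by
  have hcov : t ⊆ s ∪ (closure s)ᶜ := by
    intro x hx
    by_cases hxs : x ∈ s
    · exact Or.inl hxs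
    · refine Or.inr fun hxc => h2 x hx ⟨hxc, ?_⟩
      rwa [hs.interior_eq]
  have hne : ¬(t ∩ (closure s)ᶜ).Nonempty := by
    intro hne
    obtain ⟨x, _, hxs, hxc⟩ := ht s (closure s)ᶜ hs isClosed_closure.isOpen_compl hcov h1 hne
    exact hxc (subset_closure hxs)
  intro x hx
  rcases hcov hx with h | h
  · exact h
  · exact absurd ⟨x, hx, h⟩ hne

lemma comp_eq_arc {K₁ : Set UnitAddCircle} {u v : ℝ} (h1 : u < v) (h2 : v < u + 1)
    (hu : (u : UnitAddCircle) ∈ K₁) (hv : (v : UnitAddCircle) ∈ K₁)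
    (hfree : ∀ t ∈ Ioo u v, ((t : ℝ) : UnitAddCircle) ∉ K₁) :
    ((((u + v) / 2 : ℝ) : UnitAddCircle) ∈ K₁ᶜ) ∧
      connectedComponentIn K₁ᶜ (((u + v) / 2 : ℝ) : UnitAddCircle)
        = (fun x : ℝ => (x : UnitAddCircle)) '' Ioo u v := by
  set J := (fun x : ℝ => (x : UnitAddCircle)) '' Ioo u v with hJ
  have hmid : (u + v) / 2 ∈ Ioo u v := ⟨by linarith, by linarith⟩
  have hm : ((((u + v) / 2 : ℝ)) : UnitAddCircle) ∈ J := ⟨_, hmid, rfl⟩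
  have hJK : J ⊆ K₁ᶜ := by rintro _ ⟨t, ht, rfl⟩; exact hfree t ht
  have memc : ((((u + v) / 2 : ℝ)) : UnitAddCircle) ∈ K₁ᶜ := hJK hm
  refine ⟨memc, Subset.antisymm ?_ ?_⟩
  · refine preconn_subset isPreconnected_connectedComponentIn (arc_isOpen u v)
      ⟨_, mem_connectedComponentIn memc, hm⟩ ?_
    intro x hx hfr
    rw [arc_frontier h1 h2] at hfr
    have : x ∈ K₁ := by rcases hfr with rfl | rfl <;> assumption
    exact (connectedComponentIn_subset _ _ hx) this
  · exact (isPreconnected_Ioo.image _ pi_cont.continuousOn).subset_connectedComponentIn hm hJK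


lemma arc_of_component {K : Set UnitAddCircle} (hKcl : IsClosed K) (hKne : K.Nonempty)
    {a b : UnitAddCircle} (ha : a ∈ K) (hb : b ∈ K) (hab : a ≠ b)
    {I : Set UnitAddCircle} (hI : ∃ x ∈ Kᶜ, I = connectedComponentIn Kᶜ x)
    (hIab : frontier I = {a, b}) :
    ∃ u v : ℝ, u < v ∧ v < u + 1 ∧
      (((u : UnitAddCircle) = a ∧ (v : UnitAddCircle) = b) ∨
        ((u : UnitAddCircle) = b ∧ (v : UnitAddCircle) = a)) ∧
      ((u : UnitAddCircle) ∈ K) ∧ ((v : UnitAddCircle) ∈ K) ∧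
      (∀ t ∈ Ioo u v, ((t : ℝ) : UnitAddCircle) ∉ K) := by
  obtain ⟨x, hx, hIeq⟩ := hI
  subst hIeq
  set I := connectedComponentIn Kᶜ x with hIdef
  have hIsub : I ⊆ Kᶜ := connectedComponentIn_subset _ _
  have hxI : x ∈ I := mem_connectedComponentIn hx
  obtain ⟨xt, -, hxt⟩ := circ_surj x 0
  -- right endpoint
  set Er : Set ℝ := {t : ℝ | xt ≤ t ∧ (t : UnitAddCircle) ∈ K} with hEr
  have hErcl : IsClosed Er := by
    have : Er = Ici xt ∩ ((fun s : ℝ => (s : UnitAddCircle)) ⁻¹' K) := rfl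
    rw [this]; exact isClosed_Ici.inter (hKcl.preimage pi_cont)
  obtain ⟨k, hk⟩ := hKne
  obtain ⟨kt, hkt, hktK⟩ := circ_surj k xt
  have hErne : Er.Nonempty := ⟨kt, hkt.1, hktK ▸ hk⟩
  have hErbdd : BddBelow Er := ⟨xt, fun t ht => ht.1⟩
  set v := sInf Er with hvdef
  have hvmem : v ∈ Er := hErcl.csInf_mem hErne hErbdd
  have hv1 : v < xt + 1 := lt_of_le_of_lt (csInf_le hErbdd ⟨hkt.1, hktK ▸ hk⟩) hkt.2
  have hv0 : xt < v := by
    rcases lt_or_eq_of_le hvmem.1 with h | h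
    · exact h
    · exact absurd (hxt ▸ (h ▸ hvmem.2)) hx
  -- left endpoint
  set El : Set ℝ := {t : ℝ | t ≤ xt ∧ (t : UnitAddCircle) ∈ K} with hEl
  have hElcl : IsClosed El := by
    have : El = Iic xt ∩ ((fun s : ℝ => (s : UnitAddCircle)) ⁻¹' K) := rfl
    rw [this]; exact isClosed_Iic.inter (hKcl.preimage pi_cont)
  obtain ⟨kt', hkt', hktK'⟩ := circ_surj k (xt - 1)
  have hkt'le : kt' ≤ xt := by have := hkt'.2; linarith
  have hElne : El.Nonempty := ⟨kt', hkt'le, hktK' ▸ hk⟩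
  have hElbdd : BddAbove El := ⟨xt, fun t ht => ht.1⟩
  set u := sSup El with hudef
  have humem : u ∈ El := hElcl.csSup_mem hElne hElbdd
  have hu0 : u < xt := by
    rcases lt_or_eq_of_le humem.1 with h | h
    · exact h
    · exact absurd (hxt ▸ (h ▸ humem.2)) hx
  have huv : u < v := lt_trans hu0 hv0
  have hfree : ∀ t ∈ Ioo u v, ((t : ℝ) : UnitAddCircle) ∉ K := by
    rintro t ⟨htu, htv⟩ htK
    rcases le_or_gt xt t with h | h
    · have : v ≤ t := csInf_le hErbdd ⟨h, htK⟩
      linarith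
    · have : t ≤ u := le_csSup hElbdd ⟨h.le, htK⟩
      linarith
  have hv1' : v < u + 1 := by
    by_contra hcon
    push_neg at hcon
    have hsing : ∀ z ∈ K, z = (u : UnitAddCircle) := by
      intro z hz
      obtain ⟨zt, hzt, hztz⟩ := circ_surj z u
      rcases eq_or_lt_of_le hzt.1 with h | h
      · rw [← hztz, ← h]
      · exact absurd (hztz ▸ hz) (hfree zt ⟨h, lt_of_lt_of_le hzt.2 hcon⟩)
    exact hab ((hsing a ha).trans (hsing b hb).symm)
  -- identify I with the arc
  set J := (fun s : ℝ => (s : UnitAddCircle)) '' Ioo u v with hJdef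
  have hmJ : x ∈ J := ⟨xt, ⟨hu0, hv0⟩, hxt⟩
  have hJK : J ⊆ Kᶜ := by rintro _ ⟨t, ht, rfl⟩; exact hfree t ht
  have hJI : J ⊆ I :=
    (isPreconnected_Ioo.image _ pi_cont.continuousOn).subset_connectedComponentIn hmJ hJK
  have hIJ : I ⊆ J := by
    refine preconn_subset isPreconnected_connectedComponentIn (arc_isOpen u v) ⟨x, hxI, hmJ⟩ ?_
    intro y hy hfr
    rw [arc_frontier huv hv1'] at hfr
    have : y ∈ K := by rcases hfr with rfl | rfl; exacts [humem.2, hvmem.2]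
    exact hIsub hy this
  have hIeqJ : I = J := Subset.antisymm hIJ hJI
  have hfr : ({(u : UnitAddCircle), (v : UnitAddCircle)} : Set UnitAddCircle) = {a, b} := by
    rw [← arc_frontier huv hv1',
      show ((fun s : ℝ => (s : UnitAddCircle)) '' Ioo u v) = I from hIeqJ.symm]
    exact hIab
  have hne : (u : UnitAddCircle) ≠ (v : UnitAddCircle) := circ_ne (by linarith) (by linarith)
  have h1 : (u : UnitAddCircle) ∈ ({a, b} : Set UnitAddCircle) := hfr ▸ mem_insert _ _
  have h2 : (v : UnitAddCircle) ∈ ({a, b} : Set UnitAddCircle) := hfr ▸ mem_insert_of_mem _ rfl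
  refine ⟨u, v, huv, hv1', ?_, humem.2, hvmem.2, hfree⟩
  rcases h1 with h1 | h1
  · rcases h2 with h2 | h2
    · exact absurd (h1.trans h2.symm) hne
    · exact Or.inl ⟨h1, h2⟩
  · rcases h2 with h2 | h2
    · exact Or.inr ⟨h1, h2⟩
    · exfalso
      have h3 : a ∈ ({(u : UnitAddCircle), (v : UnitAddCircle)} : Set UnitAddCircle) := by
        rw [hfr]; exact mem_insert _ _
      have h1' : (u : UnitAddCircle) = b := h1
      have h2' : (v : UnitAddCircle) = b := h2
      rcases h3 with h3 | h3
      · exact hab (h3.trans h1')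
      · exact hab ((show a = (v : UnitAddCircle) from h3).trans h2')

lemma gap_construct {M : Type*} [MetricSpace M] {K₁ : Set UnitAddCircle} (hKc : IsCompact K₁)
    (j₁ : K₁ → M) (hj : Continuous j₁) (xp xq : M) {ε₂ : ℝ}
    (hsep : 2 * ε₂ < dist xp xq) {l r : ℝ} (hlr : l < r) (hr1 : r < l + 1)
    (hl : ((l : ℝ) : UnitAddCircle) ∈ K₁) (hr : ((r : ℝ) : UnitAddCircle) ∈ K₁)
    (hld : dist (j₁ ⟨_, hl⟩) xp ≤ ε₂) (hrd : dist (j₁ ⟨_, hr⟩) xq ≤ ε₂)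
    (H : ∀ t ∈ Icc l r, ∀ h : ((t : ℝ) : UnitAddCircle) ∈ K₁,
      dist (j₁ ⟨_, h⟩) xp ≤ ε₂ ∨ dist (j₁ ⟨_, h⟩) xq ≤ ε₂) :
    ∃ (a' b' : K₁) (I' : Set UnitAddCircle),
      (∃ x ∈ K₁ᶜ, I' = connectedComponentIn K₁ᶜ x) ∧
      (a' : UnitAddCircle) ≠ (b' : UnitAddCircle) ∧
      frontier I' = {(a' : UnitAddCircle), (b' : UnitAddCircle)} ∧
      dist (j₁ a') xp ≤ ε₂ ∧ dist (j₁ b') xq ≤ ε₂ := by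
  haveI : CompactSpace K₁ := isCompact_iff_compactSpace.mp hKc
  -- the two closed "target" sets
  set Cp : Set UnitAddCircle := Subtype.val '' (j₁ ⁻¹' Metric.closedBall xp ε₂) with hCp
  set Cq : Set UnitAddCircle := Subtype.val '' (j₁ ⁻¹' Metric.closedBall xq ε₂) with hCq
  have hCpc : IsClosed Cp :=
    (((Metric.isClosed_closedBall).preimage hj).isCompact.image continuous_subtype_val).isClosed
  have hCqc : IsClosed Cq :=
    (((Metric.isClosed_closedBall).preimage hj).isCompact.image continuous_subtype_val).isClosed
  have memC : ∀ (x : M) (t : ℝ), ((t : UnitAddCircle) ∈ Subtype.val '' (j₁ ⁻¹' Metric.closedBall x ε₂))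
      ↔ ∃ h : (t : UnitAddCircle) ∈ K₁, dist (j₁ ⟨_, h⟩) x ≤ ε₂ := by
    intro x t
    constructor
    · rintro ⟨⟨z, hz⟩, hmem, hval⟩
      simp only at hval
      subst hval
      exact ⟨hz, by simpa [Metric.mem_closedBall] using hmem⟩
    · rintro ⟨h, hd⟩
      exact ⟨⟨_, h⟩, by simpa [Metric.mem_closedBall] using hd, rfl⟩
  set S₁ : Set ℝ := Icc l r ∩ ((fun t : ℝ => (t : UnitAddCircle)) ⁻¹' Cp) with hS₁
  set S₀ : Set ℝ := Icc l r ∩ ((fun t : ℝ => (t : UnitAddCircle)) ⁻¹' Cq) with hS₀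
  have hS₁cl : IsClosed S₁ := isClosed_Icc.inter (hCpc.preimage pi_cont)
  have hS₀cl : IsClosed S₀ := isClosed_Icc.inter (hCqc.preimage pi_cont)
  have hlS : l ∈ S₁ := ⟨⟨le_refl _, hlr.le⟩, (memC xp l).mpr ⟨hl, hld⟩⟩
  have hrS : r ∈ S₀ := ⟨⟨hlr.le, le_refl _⟩, (memC xq r).mpr ⟨hr, hrd⟩⟩
  have hS₁bdd : BddAbove S₁ := ⟨r, fun t ht => ht.1.2⟩
  set u' := sSup S₁ with hu'def
  have hu'mem : u' ∈ S₁ := hS₁cl.csSup_mem ⟨l, hlS⟩ hS₁bdd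
  set T := S₀ ∩ Ici u' with hTdef
  have hTcl : IsClosed T := hS₀cl.inter isClosed_Ici
  have hTne : T.Nonempty := ⟨r, hrS, hu'mem.1.2⟩
  have hTbdd : BddBelow T := ⟨u', fun t ht => ht.2⟩
  set v' := sInf T with hv'def
  have hv'mem : v' ∈ T := hTcl.csInf_mem hTne hTbdd
  obtain ⟨hu'K, hu'd⟩ := (memC xp u').mp hu'mem.2
  obtain ⟨hv'K, hv'd⟩ := (memC xq v').mp hv'mem.1.2
  have huv' : u' < v' := by
    rcases lt_or_eq_of_le (show u' ≤ v' from hv'mem.2) with h | h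
    · exact h
    · exfalso
      have key : (⟨((u' : ℝ) : UnitAddCircle), hu'K⟩ : K₁) = ⟨((v' : ℝ) : UnitAddCircle), hv'K⟩ :=
        Subtype.ext (show ((u' : ℝ) : UnitAddCircle) = ((v' : ℝ) : UnitAddCircle) from congrArg (fun t : ℝ => (t : UnitAddCircle)) h)
      have h1 : dist (j₁ ⟨((u' : ℝ) : UnitAddCircle), hu'K⟩) xq ≤ ε₂ := by rw [key]; exact hv'd
      have h2 := dist_triangle xp (j₁ ⟨((u' : ℝ) : UnitAddCircle), hu'K⟩) xq
      have h3 : dist xp (j₁ ⟨((u' : ℝ) : UnitAddCircle), hu'K⟩)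
          = dist (j₁ ⟨((u' : ℝ) : UnitAddCircle), hu'K⟩) xp := dist_comm _ _
      linarith
  have hfree : ∀ t ∈ Ioo u' v', ((t : ℝ) : UnitAddCircle) ∉ K₁ := by
    rintro t ⟨ht1, ht2⟩ hK
    have htIcc : t ∈ Icc l r :=
      ⟨le_trans hu'mem.1.1 ht1.le, le_trans ht2.le hv'mem.1.1.2⟩
    rcases H t htIcc hK with hc | hc
    · have : t ≤ u' := le_csSup hS₁bdd ⟨htIcc, (memC xp t).mpr ⟨hK, hc⟩⟩
      linarith
    · have : v' ≤ t := csInf_le hTbdd ⟨⟨htIcc, (memC xq t).mpr ⟨hK, hc⟩⟩, ht1.le⟩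
      linarith
  have hv'1 : v' < u' + 1 :=
    lt_of_le_of_lt hv'mem.1.1.2 (lt_of_lt_of_le hr1 (by linarith [hu'mem.1.1]))
  obtain ⟨memc, hcomp⟩ := comp_eq_arc huv' hv'1 hu'K hv'K hfree
  refine ⟨⟨_, hu'K⟩, ⟨_, hv'K⟩, connectedComponentIn K₁ᶜ _, ⟨_, memc, rfl⟩, ?_, ?_, hu'd, hv'd⟩
  · exact circ_ne (by linarith) (by linarith)
  · rw [hcomp]; exact arc_frontier huv' hv'1

lemma btw_normalize {A c B : UnitAddCircle} (h : CircBtw A c B) {s : ℝ}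
    (hs : (s : UnitAddCircle) = A) :
    ∃ y z : ℝ, (y : UnitAddCircle) = c ∧ (z : UnitAddCircle) = B ∧ s ≤ y ∧ y ≤ z ∧ z ≤ s + 1 := by
  obtain ⟨x, y, z, hx, hy, hz, h1, h2, h3⟩ := h
  obtain ⟨n, hn⟩ := circ_eq_iff.mp (hx.trans hs.symm)
  refine ⟨y + n, z + n, ?_, ?_, by linarith, by linarith, by linarith⟩
  · exact (circ_eq_iff.mpr ⟨n, rfl⟩).symm.trans hy
  · exact (circ_eq_iff.mpr ⟨n, rfl⟩).symm.trans hz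

section WDSfacts
variable {M : Type*} [MetricSpace M] {f : M → M} (W : WDS M f)

lemma range_j_compact : IsCompact (Set.range W.j) := by
  haveI : CompactSpace W.K := isCompact_iff_compactSpace.mp W.K_cpt
  exact isCompact_range W.j_emb.continuous

lemma range_j_nonempty : (Set.range W.j).Nonempty := by
  obtain ⟨k, hk⟩ := W.K_ne
  exact ⟨W.j ⟨k, hk⟩, mem_range_self _⟩

lemma graph_nonempty : W.orderGraph.Nonempty := by
  obtain ⟨k, hk⟩ := W.K_ne
  obtain ⟨t, -, ht⟩ := circ_surj k 0
  exact ⟨(W.j ⟨k, hk⟩, W.j ⟨k, hk⟩, W.j ⟨k, hk⟩), ⟨k, hk⟩, ⟨k, hk⟩, ⟨k, hk⟩,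
    ⟨t, t, t, ht, ht, ht, le_refl _, le_refl _, by linarith⟩, rfl⟩

lemma rev_nonempty : W.revGraph.Nonempty := by
  obtain ⟨⟨x, y, z⟩, hm⟩ := graph_nonempty W
  exact ⟨(z, y, x), hm⟩

lemma graph_subset : W.orderGraph ⊆ (Set.range W.j) ×ˢ ((Set.range W.j) ×ˢ (Set.range W.j)) := by
  rintro ⟨m1, m2, m3⟩ ⟨A, c, B, -, heq⟩
  rw [heq]
  exact ⟨mem_range_self _, mem_range_self _, mem_range_self _⟩

lemma graph_bounded : Bornology.IsBounded W.orderGraph :=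
  (((range_j_compact W).isBounded).prod (((range_j_compact W).isBounded).prod
    ((range_j_compact W).isBounded))).subset (graph_subset W)

lemma rev_bounded : Bornology.IsBounded W.revGraph := by
  refine ((((range_j_compact W).isBounded).prod (((range_j_compact W).isBounded).prod
    ((range_j_compact W).isBounded)))).subset ?_
  rintro ⟨m1, m2, m3⟩ hm
  obtain ⟨A, c, B, -, heq⟩ := hm
  have e1 : m3 = W.j A := congrArg Prod.fst heq
  have e2 : m2 = W.j c := congrArg (fun p => p.2.1) heq
  have e3 : m1 = W.j B := congrArg (fun p => p.2.2) heq
  exact ⟨e3 ▸ mem_range_self _, e2 ▸ mem_range_self _, e1 ▸ mem_range_self _⟩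

end WDSfacts

lemma dist3_fst {M : Type*} [MetricSpace M] (p q : M × M × M) : dist p.1 q.1 ≤ dist p q :=
  le_max_left _ _

lemma dist3_mid {M : Type*} [MetricSpace M] (p q : M × M × M) : dist p.2.1 q.2.1 ≤ dist p q :=
  le_trans (le_max_left _ _) (le_max_right _ _)

lemma dist3_lst {M : Type*} [MetricSpace M] (p q : M × M × M) : dist p.2.2 q.2.2 ≤ dist p q :=
  le_trans (le_max_right _ _) (le_max_right _ _)


lemma endpoint_locator {M : Type*} [MetricSpace M] {f : M → M} (W : WDS M f)
    {w : ℝ} (hw : ((w : ℝ) : UnitAddCircle) ∈ W.K) {η : ℝ} (hη : 0 < η) :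
    ∃ δ₂ > (0 : ℝ), ∀ c : W.K, dist (W.j c) (W.j ⟨_, hw⟩) < δ₂ →
      ∃ s ∈ Ioo (w - η) (w + η), ((s : ℝ) : UnitAddCircle) = (c : UnitAddCircle) := by
  haveI : CompactSpace W.K := isCompact_iff_compactSpace.mp W.K_cpt
  set Uarc := (fun s : ℝ => (s : UnitAddCircle)) '' Ioo (w - η) (w + η) with hUarc
  set D := W.j '' {c : W.K | (c : UnitAddCircle) ∉ Uarc} with hD
  have hDcomp : IsCompact D := by
    refine IsClosed.isCompact ?_ |>.image W.j_emb.continuous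
    exact (isClosed_compl_iff.mpr (arc_isOpen _ _)).preimage continuous_subtype_val
  by_cases hDne : D.Nonempty
  · have hxpD : W.j ⟨_, hw⟩ ∉ D := by
      rintro ⟨c, hc, hceq⟩
      have : c = ⟨_, hw⟩ := W.j_emb.injective hceq
      rw [this] at hc
      exact hc ⟨w, ⟨by linarith, by linarith⟩, rfl⟩
    have hpos : 0 < Metric.infDist (W.j ⟨_, hw⟩) D :=
      (hDcomp.isClosed.notMem_iff_infDist_pos hDne).mp hxpD
    refine ⟨_, hpos, fun c hc => ?_⟩
    by_contra hcon
    push_neg at hcon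
    have hcD : W.j c ∈ D := ⟨c, fun ⟨s, hs, hseq⟩ => hcon s hs hseq, rfl⟩
    have := Metric.infDist_le_dist_of_mem (x := W.j ⟨_, hw⟩) hcD
    rw [dist_comm] at hc
    linarith
  · refine ⟨1, one_pos, fun c _ => ?_⟩
    by_contra hcon
    push_neg at hcon
    exact hDne ⟨W.j c, c, fun ⟨s, hs, hseq⟩ => hcon s hs hseq, rfl⟩

lemma key {M : Type*} [MetricSpace M] {f : M → M} (W : WDS M f)
    {u v : ℝ} (huv : u < v) (hv1 : v < u + 1)
    (hu : ((u : ℝ) : UnitAddCircle) ∈ W.K) (hv : ((v : ℝ) : UnitAddCircle) ∈ W.K)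
    (hfree : ∀ t ∈ Ioo u v, ((t : ℝ) : UnitAddCircle) ∉ W.K) (ε : ℝ) (hε : 0 < ε) :
    ∃ δ > (0:ℝ), ∀ W₁ : WDS M f,
      Metric.hausdorffDist (Set.range W₁.j) (Set.range W.j) < δ →
      (Metric.hausdorffDist W₁.orderGraph W.orderGraph < δ ∨
        Metric.hausdorffDist W₁.revGraph W.orderGraph < δ) →
      ∃ (a' b' : W₁.K) (I' : Set UnitAddCircle),
        (∃ x ∈ W₁.Kᶜ, I' = connectedComponentIn W₁.Kᶜ x) ∧
        (a' : UnitAddCircle) ≠ (b' : UnitAddCircle) ∧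
        frontier I' = {(a' : UnitAddCircle), (b' : UnitAddCircle)} ∧
        dist (W₁.j a') (W.j ⟨_, hu⟩) < ε ∧ dist (W₁.j b') (W.j ⟨_, hv⟩) < ε := by
  haveI : CompactSpace W.K := isCompact_iff_compactSpace.mp W.K_cpt
  set xp := W.j ⟨_, hu⟩ with hxp
  set xq := W.j ⟨_, hv⟩ with hxq
  have hcne : ((u : ℝ) : UnitAddCircle) ≠ ((v : ℝ) : UnitAddCircle) :=
    circ_ne (by linarith) (by linarith)
  have hpq : xp ≠ xq := fun h => hcne (congrArg Subtype.val (W.j_emb.injective h))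
  have hd0 : 0 < dist xp xq := dist_pos.mpr hpq
  set ε₂ := min (ε / 2) (dist xp xq / 4) with hε₂def
  have hε₂ : 0 < ε₂ := lt_min (by linarith) (by linarith)
  have hε₂ε : ε₂ ≤ ε / 2 := min_le_left _ _
  have hε₂d : ε₂ ≤ dist xp xq / 4 := min_le_right _ _
  -- uniform continuity of the parametrized embedding at the endpoints
  set Gm : {t : ℝ // ((t : ℝ) : UnitAddCircle) ∈ W.K} → M :=
    fun t => W.j ⟨((t.1 : ℝ) : UnitAddCircle), t.2⟩ with hGm
  have hGmc : Continuous Gm :=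
    W.j_emb.continuous.comp (Continuous.subtype_mk (pi_cont.comp continuous_subtype_val) _)
  obtain ⟨ηu, hηu0, hηu⟩ := Metric.continuous_iff.mp hGmc ⟨u, hu⟩ (ε₂ / 2) (by linarith)
  obtain ⟨ηv, hηv0, hηv⟩ := Metric.continuous_iff.mp hGmc ⟨v, hv⟩ (ε₂ / 2) (by linarith)
  set η := min (min (ηu / 2) (ηv / 2)) (min ((v - u) / 3) ((u + 1 - v) / 3)) with hηdef
  have hη0 : 0 < η := by
    refine lt_min (lt_min (by linarith) (by linarith)) (lt_min (by linarith) (by linarith))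
  have hηu2 : η ≤ ηu / 2 := le_trans (min_le_left _ _) (min_le_left _ _)
  have hηv2 : η ≤ ηv / 2 := le_trans (min_le_left _ _) (min_le_right _ _)
  have hη3 : 3 * η ≤ v - u := by
    have h1 : η ≤ min ((v - u) / 3) ((u + 1 - v) / 3) :=
      min_le_right (min (ηu / 2) (ηv / 2)) _
    have h2 := le_trans h1 (min_le_left ((v - u) / 3) ((u + 1 - v) / 3))
    linarith
  have hη3' : 3 * η ≤ u + 1 - v := by
    have h1 : η ≤ min ((v - u) / 3) ((u + 1 - v) / 3) :=
      min_le_right (min (ηu / 2) (ηv / 2)) _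
    have h2 := le_trans h1 (min_le_right ((v - u) / 3) ((u + 1 - v) / 3))
    linarith
  obtain ⟨δ₂, hδ₂0, hδ₂⟩ := endpoint_locator W hu hη0
  obtain ⟨δ₃, hδ₃0, hδ₃⟩ := endpoint_locator W hv hη0
  set δ := min (min (ε₂ / 2) (δ₂ / 2)) (δ₃ / 2) with hδdef
  have hδ0 : 0 < δ := lt_min (lt_min (by linarith) (by linarith)) (by linarith)
  have hδε₂ : δ ≤ ε₂ / 2 := le_trans (min_le_left _ _) (min_le_left _ _)
  have hδδ₂ : δ ≤ δ₂ / 2 := le_trans (min_le_left _ _) (min_le_right _ _)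
  have hδδ₃ : δ ≤ δ₃ / 2 := min_le_right _ _
  refine ⟨δ, hδ0, ?_⟩
  intro W₁ hrange hgraph
  haveI : CompactSpace W₁.K := isCompact_iff_compactSpace.mp W₁.K_cpt
  have hfinR : EMetric.hausdorffEdist (Set.range W₁.j) (Set.range W.j) ≠ ⊤ :=
    Metric.hausdorffEdist_ne_top_of_nonempty_of_bounded (range_j_nonempty W₁)
      (range_j_nonempty W) (range_j_compact W₁).isBounded (range_j_compact W).isBounded
  obtain ⟨yα, hyα, hdα'⟩ :=
    Metric.exists_dist_lt_of_hausdorffDist_lt' (mem_range_self (⟨_, hu⟩ : W.K)) hrange hfinR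
  obtain ⟨α, rfl⟩ := hyα
  have hdα : dist (W₁.j α) xp < δ := hdα'
  obtain ⟨yβ, hyβ, hdβ'⟩ :=
    Metric.exists_dist_lt_of_hausdorffDist_lt' (mem_range_self (⟨_, hv⟩ : W.K)) hrange hfinR
  obtain ⟨β, rfl⟩ := hyβ
  have hdβ : dist (W₁.j β) xq < δ := hdβ'
  have hαβ : (α : UnitAddCircle) ≠ (β : UnitAddCircle) := by
    intro h
    have hab : α = β := Subtype.ext h
    rw [hab] at hdα
    have h1 := dist_triangle xp (W₁.j β) xq
    have h2 : dist xp (W₁.j β) = dist (W₁.j β) xp := dist_comm _ _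
    linarith [hd0, hε₂d, hδε₂]
  -- the key middle estimate
  have hG_mid : ∀ m ∈ W.orderGraph, dist m.1 xp < δ₂ → dist m.2.2 xq < δ₃ →
      dist m.2.1 xp < ε₂ / 2 ∨ dist m.2.1 xq < ε₂ / 2 := by
    rintro ⟨m1, m2, m3⟩ ⟨A, c, B, hbtw, heq⟩ h1 h3
    have e1 : m1 = W.j A := congrArg Prod.fst heq
    have e2 : m2 = W.j c := congrArg (fun p => p.2.1) heq
    have e3 : m3 = W.j B := congrArg (fun p => p.2.2) heq
    simp only at h1 h3 ⊢
    rw [e1] at h1; rw [e3] at h3; rw [e2]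
    obtain ⟨s, hs, hsA⟩ := hδ₂ A h1
    obtain ⟨t, ht, htB⟩ := hδ₃ B h3
    obtain ⟨y, z, hyc, hzB, hsy, hyz, hz1⟩ := btw_normalize hbtw hsA
    have hzt : z = t := by
      refine circ_inj (hzB.trans htB.symm) ?_
      rw [abs_lt]
      obtain ⟨hs1, hs2⟩ := hs
      obtain ⟨ht1, ht2⟩ := ht
      constructor <;> linarith
    subst hzt
    have hyK : ((y : ℝ) : UnitAddCircle) ∈ W.K := by rw [hyc]; exact c.2
    have hjc : W.j c = Gm ⟨y, hyK⟩ := by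
      have : c = ⟨((y : ℝ) : UnitAddCircle), hyK⟩ := Subtype.ext hyc.symm
      rw [this]
    have hy_not : y ∉ Ioo u v := fun hy => hfree y hy hyK
    obtain ⟨hs1, hs2⟩ := hs
    obtain ⟨ht1, ht2⟩ := ht
    rcases le_or_gt y u with hyu | hyu
    · left
      have hdy : dist (⟨y, hyK⟩ : {t : ℝ // ((t : ℝ) : UnitAddCircle) ∈ W.K}) ⟨u, hu⟩ < ηu := by
        rw [Subtype.dist_eq, Real.dist_eq, abs_lt]
        constructor <;> linarith
      rw [hjc]
      exact hηu _ hdy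
    · right
      have hyv : v ≤ y := by
        by_contra hcon
        push_neg at hcon
        exact hy_not ⟨hyu, hcon⟩
      have hdy : dist (⟨y, hyK⟩ : {t : ℝ // ((t : ℝ) : UnitAddCircle) ∈ W.K}) ⟨v, hv⟩ < ηv := by
        rw [Subtype.dist_eq, Real.dist_eq, abs_lt]
        constructor <;> linarith
      rw [hjc]
      exact hηv _ hdy
  -- the arc estimate, uniform in the two graph cases
  have main : ∀ l r : ℝ, l < r → r < l + 1 →
      ∀ hlK : ((l : ℝ) : UnitAddCircle) ∈ W₁.K, ∀ hrK : ((r : ℝ) : UnitAddCircle) ∈ W₁.K,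
      (∀ t ∈ Icc l r, ∀ h : ((t : ℝ) : UnitAddCircle) ∈ W₁.K,
        dist (W₁.j ⟨_, h⟩) xp ≤ ε₂ ∨ dist (W₁.j ⟨_, h⟩) xq ≤ ε₂) →
      dist (W₁.j ⟨_, hlK⟩) xp ≤ ε₂ → dist (W₁.j ⟨_, hrK⟩) xq ≤ ε₂ →
      ∃ (a' b' : W₁.K) (I' : Set UnitAddCircle),
        (∃ x ∈ W₁.Kᶜ, I' = connectedComponentIn W₁.Kᶜ x) ∧
        (a' : UnitAddCircle) ≠ (b' : UnitAddCircle) ∧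
        frontier I' = {(a' : UnitAddCircle), (b' : UnitAddCircle)} ∧
        dist (W₁.j a') xp < ε ∧ dist (W₁.j b') xq < ε := by
    intro l r hlr hr1 hlK hrK hH hld hrd
    have hsep : 2 * ε₂ < dist xp xq := by linarith
    obtain ⟨a', b', I', hI', hne', hfr', h1, h2⟩ :=
      gap_construct W₁.K_cpt W₁.j W₁.j_emb.continuous xp xq hsep hlr hr1 hlK hrK hld hrd hH
    exact ⟨a', b', I', hI', hne', hfr',
      lt_of_le_of_lt h1 (by linarith), lt_of_le_of_lt h2 (by linarith)⟩
  -- case split on the graph hypothesis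
  rcases hgraph with hg | hg
  · have hfinG : EMetric.hausdorffEdist W₁.orderGraph W.orderGraph ≠ ⊤ :=
      Metric.hausdorffEdist_ne_top_of_nonempty_of_bounded (graph_nonempty W₁)
        (graph_nonempty W) (graph_bounded W₁) (graph_bounded W)
    obtain ⟨la, -, hla⟩ := circ_surj (α : UnitAddCircle) 0
    obtain ⟨lb, hlb, hlbβ⟩ := circ_surj (β : UnitAddCircle) la
    have hlab : la < lb := by
      rcases lt_or_eq_of_le hlb.1 with h | h
      · exact h
      · rw [← h] at hlbβ
        exact absurd (hla.symm.trans hlbβ) hαβ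
    have harc : ∀ t ∈ Icc la lb, ∀ h : ((t : ℝ) : UnitAddCircle) ∈ W₁.K,
        dist (W₁.j ⟨_, h⟩) xp ≤ ε₂ ∨ dist (W₁.j ⟨_, h⟩) xq ≤ ε₂ := by
      intro t ht hK
      have hbtw : CircBtw (α : UnitAddCircle) ((t : ℝ) : UnitAddCircle) (β : UnitAddCircle) :=
        ⟨la, t, lb, hla, rfl, hlbβ, ht.1, ht.2, by linarith [hlb.2]⟩
      have hmem : (W₁.j α, W₁.j ⟨_, hK⟩, W₁.j β) ∈ W₁.orderGraph :=
        ⟨α, ⟨_, hK⟩, β, hbtw, rfl⟩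
      obtain ⟨m, hmG, hdm⟩ := Metric.exists_dist_lt_of_hausdorffDist_lt hmem hg hfinG
      have hd1 : dist m.1 xp < δ₂ := by
        have hc1 : dist (W₁.j α) m.1 ≤ dist (W₁.j α, W₁.j ⟨_, hK⟩, W₁.j β) m :=
          dist3_fst (W₁.j α, W₁.j ⟨_, hK⟩, W₁.j β) m
        have := dist_triangle m.1 (W₁.j α) xp
        rw [dist_comm (W₁.j α) m.1] at hc1
        linarith
      have hd3 : dist m.2.2 xq < δ₃ := by
        have hc3 : dist (W₁.j β) m.2.2 ≤ dist (W₁.j α, W₁.j ⟨_, hK⟩, W₁.j β) m :=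
          dist3_lst (W₁.j α, W₁.j ⟨_, hK⟩, W₁.j β) m
        have := dist_triangle m.2.2 (W₁.j β) xq
        rw [dist_comm (W₁.j β) m.2.2] at hc3
        linarith
      have hcm : dist (W₁.j ⟨_, hK⟩) m.2.1 ≤ dist (W₁.j α, W₁.j ⟨_, hK⟩, W₁.j β) m :=
        dist3_mid (W₁.j α, W₁.j ⟨_, hK⟩, W₁.j β) m
      rcases hG_mid m hmG hd1 hd3 with h | h
      · left
        have := dist_triangle (W₁.j ⟨_, hK⟩) m.2.1 xp
        linarith
      · right
        have := dist_triangle (W₁.j ⟨_, hK⟩) m.2.1 xq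
        linarith
    have hlaK : ((la : ℝ) : UnitAddCircle) ∈ W₁.K := by rw [hla]; exact α.2
    have hlbK : ((lb : ℝ) : UnitAddCircle) ∈ W₁.K := by rw [hlbβ]; exact β.2
    have hjla : W₁.j ⟨_, hlaK⟩ = W₁.j α := by
      have : (⟨_, hlaK⟩ : W₁.K) = α := Subtype.ext hla
      rw [this]
    have hjlb : W₁.j ⟨_, hlbK⟩ = W₁.j β := by
      have : (⟨_, hlbK⟩ : W₁.K) = β := Subtype.ext hlbβ
      rw [this]
    refine main la lb hlab hlb.2 hlaK hlbK harc ?_ ?_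
    · rw [hjla]; linarith
    · rw [hjlb]; linarith
  · have hfinG : EMetric.hausdorffEdist W₁.revGraph W.orderGraph ≠ ⊤ :=
      Metric.hausdorffEdist_ne_top_of_nonempty_of_bounded (rev_nonempty W₁)
        (graph_nonempty W) (rev_bounded W₁) (graph_bounded W)
    obtain ⟨lb, -, hlb⟩ := circ_surj (β : UnitAddCircle) 0
    obtain ⟨la, hlaI, hlaα⟩ := circ_surj (α : UnitAddCircle) lb
    have hlab : lb < la := by
      rcases lt_or_eq_of_le hlaI.1 with h | h
      · exact h
      · rw [← h] at hlaα
        exact absurd (hlb.symm.trans hlaα) hαβ.symm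
    have harc : ∀ t ∈ Icc lb la, ∀ h : ((t : ℝ) : UnitAddCircle) ∈ W₁.K,
        dist (W₁.j ⟨_, h⟩) xp ≤ ε₂ ∨ dist (W₁.j ⟨_, h⟩) xq ≤ ε₂ := by
      intro t ht hK
      have hbtw : CircBtw (β : UnitAddCircle) ((t : ℝ) : UnitAddCircle) (α : UnitAddCircle) :=
        ⟨lb, t, la, hlb, rfl, hlaα, ht.1, ht.2, by linarith [hlaI.2]⟩
      have hmemG : (W₁.j β, W₁.j ⟨_, hK⟩, W₁.j α) ∈ W₁.orderGraph :=
        ⟨β, ⟨_, hK⟩, α, hbtw, rfl⟩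
      have hmem : (W₁.j α, W₁.j ⟨_, hK⟩, W₁.j β) ∈ W₁.revGraph := hmemG
      obtain ⟨m, hmG, hdm⟩ := Metric.exists_dist_lt_of_hausdorffDist_lt hmem hg hfinG
      have hd1 : dist m.1 xp < δ₂ := by
        have hc1 : dist (W₁.j α) m.1 ≤ dist (W₁.j α, W₁.j ⟨_, hK⟩, W₁.j β) m :=
          dist3_fst (W₁.j α, W₁.j ⟨_, hK⟩, W₁.j β) m
        have := dist_triangle m.1 (W₁.j α) xp
        rw [dist_comm (W₁.j α) m.1] at hc1
        linarith
      have hd3 : dist m.2.2 xq < δ₃ := by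
        have hc3 : dist (W₁.j β) m.2.2 ≤ dist (W₁.j α, W₁.j ⟨_, hK⟩, W₁.j β) m :=
          dist3_lst (W₁.j α, W₁.j ⟨_, hK⟩, W₁.j β) m
        have := dist_triangle m.2.2 (W₁.j β) xq
        rw [dist_comm (W₁.j β) m.2.2] at hc3
        linarith
      have hcm : dist (W₁.j ⟨_, hK⟩) m.2.1 ≤ dist (W₁.j α, W₁.j ⟨_, hK⟩, W₁.j β) m :=
        dist3_mid (W₁.j α, W₁.j ⟨_, hK⟩, W₁.j β) m
      rcases hG_mid m hmG hd1 hd3 with h | h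
      · left
        have := dist_triangle (W₁.j ⟨_, hK⟩) m.2.1 xp
        linarith
      · right
        have := dist_triangle (W₁.j ⟨_, hK⟩) m.2.1 xq
        linarith
    have hlaK : ((la : ℝ) : UnitAddCircle) ∈ W₁.K := by rw [hlaα]; exact α.2
    have hlbK : ((lb : ℝ) : UnitAddCircle) ∈ W₁.K := by rw [hlb]; exact β.2
    have hjla : W₁.j ⟨_, hlaK⟩ = W₁.j α := by
      have : (⟨_, hlaK⟩ : W₁.K) = α := Subtype.ext hlaα
      rw [this]
    have hjlb : W₁.j ⟨_, hlbK⟩ = W₁.j β := by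
      have : (⟨_, hlbK⟩ : W₁.K) = β := Subtype.ext hlb
      rw [this]
    -- apply the construction with the roles of xp and xq exchanged
    have hsep' : 2 * ε₂ < dist xq xp := by rw [dist_comm]; linarith
    obtain ⟨a', b', I', hI', hne', hfr', h1, h2⟩ :=
      gap_construct W₁.K_cpt W₁.j W₁.j_emb.continuous xq xp hsep' hlab hlaI.2 hlbK hlaK
        (by rw [hjlb]; linarith)
        (by rw [hjla]; linarith)
        (fun t ht h => (harc t ht h).symm)
    refine ⟨b', a', I', hI', hne'.symm, ?_, lt_of_le_of_lt h2 (by linarith),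
      lt_of_le_of_lt h1 (by linarith)⟩
    rw [hfr', Set.pair_comm]


end GapPersist

/-- Gaps of a weak Denjoy sub-system persist for nearby weak Denjoy sub-systems:
if `{j a, j b}` is a gap of `(K, j, h)`, then any WDS close enough to `(K, j, h)` in
the Hausdorff sense (for the images and the order graphs, up to reversal) has a gap
close to `{j a, j b}`. -/
theorem gap_persists
    {M : Type*} [MetricSpace M] (f : M → M) (hf : IsHomeomorph f)
    (W : WDS M f) (a b : UnitAddCircle) (ha : a ∈ W.K) (hb : b ∈ W.K) (hab : a ≠ b)
    (I : Set UnitAddCircle) (hI : ∃ x ∈ W.Kᶜ, I = connectedComponentIn W.Kᶜ x)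
    (hIab : frontier I = {a, b}) :
    ∀ ε > (0 : ℝ), ∃ δ > (0 : ℝ), ∀ W₁ : WDS M f,
      Metric.hausdorffDist (Set.range W₁.j) (Set.range W.j) < δ →
      (Metric.hausdorffDist W₁.orderGraph W.orderGraph < δ ∨
        Metric.hausdorffDist W₁.revGraph W.orderGraph < δ) →
      ∃ (a' b' : W₁.K) (I' : Set UnitAddCircle),
        (∃ x ∈ W₁.Kᶜ, I' = connectedComponentIn W₁.Kᶜ x) ∧
        (a' : UnitAddCircle) ≠ (b' : UnitAddCircle) ∧
        frontier I' = {(a' : UnitAddCircle), (b' : UnitAddCircle)} ∧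
        dist (W₁.j a') (W.j ⟨a, ha⟩) < ε ∧ dist (W₁.j b') (W.j ⟨b, hb⟩) < ε := by
  have hKcl : IsClosed W.K := W.K_cpt.isClosed
  obtain ⟨u, v, huv, hv1, hcase, huK, hvK, hfree⟩ :=
    GapPersist.arc_of_component hKcl W.K_ne ha hb hab hI hIab
  intro ε hε
  obtain ⟨δ, hδ0, hδ⟩ := GapPersist.key W huv hv1 huK hvK hfree ε hε
  refine ⟨δ, hδ0, ?_⟩
  intro W₁ h1 h2
  obtain ⟨a', b', I', hI', hne', hfr', hd1, hd2⟩ := hδ W₁ h1 h2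
  rcases hcase with ⟨hua, hvb⟩ | ⟨hub, hva⟩
  · have e1 : (⟨_, huK⟩ : W.K) = ⟨a, ha⟩ := Subtype.ext hua
    have e2 : (⟨_, hvK⟩ : W.K) = ⟨b, hb⟩ := Subtype.ext hvb
    rw [e1] at hd1; rw [e2] at hd2
    exact ⟨a', b', I', hI', hne', hfr', hd1, hd2⟩
  · have e1 : (⟨_, huK⟩ : W.K) = ⟨b, hb⟩ := Subtype.ext hub
    have e2 : (⟨_, hvK⟩ : W.K) = ⟨a, ha⟩ := Subtype.ext hva
    rw [e1] at hd1; rw [e2] at hd2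
    exact ⟨b', a', I', hI', hne'.symm, by rw [hfr', Set.pair_comm], hd2, hd1⟩
end
end

section
/- Let X be a compact metric space and f : X → X a homeomorphism that is expansive with constant ε > 0: for all x, y ∈ X, if dist(fⁿ(x), fⁿ(y)) < ε for all n ∈ ℤ, then x = y. Suppose X = C₁ ∪ … ∪ C_N where the C_i are pairwise disjoint, clopen in X, and each of diameter less than ε. Define the itinerary map H : X → (Fin N)^ℤ by H(x)(k) = i where fᵏ(x) ∈ C_i. Then H is continuous and injective, hence a homeomorphism onto its image, and H ∘ f = σ ∘ H, where σ is the shift on (Fin N)^ℤ (σ(u)(k) = u(k+1)) and (Fin N)^ℤ carries the product topology. -/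
open Set

/-- The shift on two-sided sequences. -/
def shiftSeq {A : Type*} (u : ℤ → A) : ℤ → A := fun k => u (k + 1)

/-- For an expansive homeomorphism of a compact metric space and a finite partition into
clopen sets of diameter less than the expansivity constant, the itinerary map is a
continuous injective map (hence a homeomorphism onto its image) conjugating the
dynamics to the shift. -/
theorem itinerary_embedding
    {X : Type*} [MetricSpace X] [CompactSpace X] (f : X ≃ₜ X)
    (ε : ℝ) (hε : 0 < ε)
    (hexp : ∀ x y : X,
      (∀ n : ℤ, dist ((f.toEquiv ^ n) x) ((f.toEquiv ^ n) y) < ε) → x = y)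
    (N : ℕ) (C : Fin N → Set X)
    (hdisj : ∀ i j : Fin N, i ≠ j → Disjoint (C i) (C j))
    (hclopen : ∀ i : Fin N, IsClopen (C i))
    (hdiam : ∀ i : Fin N, Metric.diam (C i) < ε)
    (hcover : (⋃ i, C i) = Set.univ)
    (H : X → (ℤ → Fin N))
    (hH : ∀ (x : X) (k : ℤ), (f.toEquiv ^ k) x ∈ C (H x k)) :
    Continuous H ∧ Function.Injective H ∧ Topology.IsEmbedding H ∧
      ∀ x : X, H (f x) = shiftSeq (H x) := by
  -- uniqueness of the itinerary index
  have key : ∀ (x : X) (k : ℤ) (i : Fin N), (f.toEquiv ^ k) x ∈ C i → H x k = i := by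
    intro x k i hi
    by_contra h
    exact Set.disjoint_left.mp (hdisj _ _ h) (hH x k) hi
  -- continuity of the integer powers of f
  have hc : ∀ k : ℤ, Continuous fun x : X => (f.toEquiv ^ k) x := by
    intro k
    induction k using Int.induction_on with
    | zero => simpa using continuous_id'
    | succ n ih =>
        have : ∀ x : X, (f.toEquiv ^ ((n : ℤ) + 1)) x = (f.toEquiv ^ (n : ℤ)) (f x) := by
          intro x
          rw [zpow_add_one]
          rfl
        simp only [this]
        exact ih.comp f.continuous
    | pred n ih =>
        have : ∀ x : X, (f.toEquiv ^ (-(n : ℤ) - 1)) x = (f.toEquiv ^ (-(n : ℤ))) (f.symm x) := by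
          intro x
          rw [zpow_sub_one]
          rfl
        simp only [this]
        exact ih.comp f.symm.continuous
  -- continuity of H
  have hcont : Continuous H := by
    apply continuous_pi
    intro k
    rw [continuous_discrete_rng]
    intro i
    have : (fun x => H x k) ⁻¹' {i} = (fun x : X => (f.toEquiv ^ k) x) ⁻¹' (C i) := by
      ext x
      constructor
      · intro hx
        have : H x k = i := hx
        simpa [← this] using hH x k
      · intro hx
        exact key x k i hx
    rw [this]
    exact (hclopen i).isOpen.preimage (hc k)
  -- injectivity
  have hinj : Function.Injective H := by
    intro x y hxy
    apply hexp x y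
    intro n
    have h1 := hH x n
    have h2 := hH y n
    rw [hxy] at h1
    calc dist ((f.toEquiv ^ n) x) ((f.toEquiv ^ n) y)
        ≤ Metric.diam (C (H y n)) :=
          Metric.dist_le_diam_of_mem
            (((hclopen _).isClosed.isCompact).isBounded) h1 h2
      _ < ε := hdiam _
  refine ⟨hcont, hinj, ?_, ?_⟩
  · exact (hcont.isClosedEmbedding hinj).isEmbedding
  · intro x
    funext k
    have hk : (f.toEquiv ^ k) (f x) = (f.toEquiv ^ (k + 1)) x := by
      rw [zpow_add_one]
      rfl
    have := hH x (k + 1)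
    rw [← hk] at this
    exact key (f x) k _ this
end

section
/- Let p ≥ 1 and let A : Fin p × Fin p → {true, false} be an irreducible transition matrix (for all i, j ∈ Fin p there exist n ≥ 1 and a finite sequence i = u₀, u₁, …, u_n = j with A(u_m, u_{m+1}) = true for all m < n). Let Σ_A = {u : ℤ → Fin p | ∀ k ∈ ℤ, A(u(k), u(k+1)) = true} with the product topology and the shift σ_A(u)(k) = u(k+1), and assume Σ_A is infinite. Then there exist N ≥ 1 and a nonempty compact subset 𝒦₀ ⊆ Σ_A with σ_A^N(𝒦₀) = 𝒦₀ and a homeomorphism φ : Σ₂ → 𝒦₀ (onto 𝒦₀) such that σ_A^N ∘ φ = φ ∘ σ, i.e. the restriction of σ_A^N to 𝒦₀ is topologically conjugate to the full shift on two symbols. -/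
open Set

/-- Irreducibility of a transition matrix: any symbol can be connected to any other
by an admissible word. -/
def MatIrreducible {p : ℕ} (A : Fin p → Fin p → Bool) : Prop :=
  ∀ i j : Fin p, ∃ n : ℕ, 1 ≤ n ∧ ∃ u : ℕ → Fin p, u 0 = i ∧ u n = j ∧
    ∀ m < n, A (u m) (u (m + 1)) = true

/-- The two-sided subshift of finite type associated to a transition matrix `A`. -/
def SubshiftSFT {p : ℕ} (A : Fin p → Fin p → Bool) : Set (ℤ → Fin p) :=
  {u | ∀ k : ℤ, A (u k) (u (k + 1)) = true}

lemma shiftSeq_iterate {A : Type*} (n : ℕ) (v : ℤ → A) (k : ℤ) :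
    shiftSeq^[n] v k = v (k + n) := by
  induction n generalizing v k with
  | zero => simp
  | succ n ih =>
    rw [Function.iterate_succ_apply, ih]
    show v (k + n + 1) = v (k + (n + 1 : ℕ))
    congr 1
    push_cast
    ring

lemma exists_two_successors (p : ℕ) (A : Fin p → Fin p → Bool)
    (hA : MatIrreducible A) (hinf : (SubshiftSFT A).Infinite) :
    ∃ a b b' : Fin p, b ≠ b' ∧ A a b = true ∧ A a b' = true := by
  by_contra h
  push_neg at h
  have hdet : ∀ a b b' : Fin p, A a b = true → A a b' = true → b = b' := by
    intro a b b' h1 h2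
    by_contra hne
    exact h a b b' hne h1 h2
  have hsucc : ∀ i : Fin p, ∃ b, A i b = true := by
    intro i
    obtain ⟨n, hn, u, hu0, _, hadm⟩ := hA i i
    exact ⟨u 1, by rw [← hu0]; exact hadm 0 hn⟩
  choose f hf using hsucc
  have hdet' : ∀ i b, A i b = true → b = f i := fun i b h1 => hdet i b (f i) h1 (hf i)
  have reach : ∀ i j : Fin p, ∃ n, 1 ≤ n ∧ f^[n] i = j := by
    intro i j
    obtain ⟨n, hn, u, hu0, hun, hadm⟩ := hA i j
    have key : ∀ m, m ≤ n → u m = f^[m] i := by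
      intro m
      induction m with
      | zero => intro _; simpa using hu0
      | succ m ih =>
        intro hm
        rw [Function.iterate_succ_apply', ← ih (by omega)]
        exact hdet' _ _ (hadm m (by omega))
    exact ⟨n, hn, by rw [← key n le_rfl, hun]⟩
  have hsurj : Function.Surjective f := by
    intro j
    obtain ⟨n, hn, hfn⟩ := reach j j
    refine ⟨f^[n-1] j, ?_⟩
    have : f (f^[n-1] j) = f^[n-1+1] j := (Function.iterate_succ_apply' f (n-1) j).symm
    rw [this, show n - 1 + 1 = n by omega]
    exact hfn
  have hinjf : Function.Injective f := Finite.injective_iff_surjective.mpr hsurj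
  have hinj0 : Set.InjOn (fun u => u 0) (SubshiftSFT A) := by
    intro u hu v hv h0
    simp only at h0
    funext k
    induction k using Int.induction_on with
    | zero => exact h0
    | succ k ih =>
      have h1 : u (k + 1) = f (u k) := hdet' _ _ (hu k)
      have h2 : v (k + 1) = f (v k) := hdet' _ _ (hv k)
      rw [h1, h2, ih]
    | pred k ih =>
      have h1 : u (-k - 1 + 1) = f (u (-k - 1)) := hdet' _ _ (hu (-k - 1))
      have h2 : v (-k - 1 + 1) = f (v (-k - 1)) := hdet' _ _ (hv (-k - 1))
      rw [show -(k:ℤ) - 1 + 1 = -k by ring] at h1 h2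
      apply hinjf
      rw [← h1, ← h2, ih]
  exact hinf (Set.Finite.of_finite_image (Set.toFinite _) hinj0)

lemma mkPeriodicLoop {p : ℕ} (A : Fin p → Fin p → Bool) (hA : MatIrreducible A)
    (a b : Fin p) (hab : A a b = true) :
    ∃ ℓ : ℕ, 2 ≤ ℓ ∧ ∃ V : ℕ → Fin p, V 0 = a ∧ V 1 = b ∧
      (∀ m, V (m + ℓ) = V m) ∧ (∀ m, A (V m) (V (m + 1)) = true) := by
  obtain ⟨n, hn, u, hu0, hun, hadm⟩ := hA b a
  set ℓ := n + 1 with hℓdef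
  set L : ℕ → Fin p := fun m => if m = 0 then a else u (m - 1) with hL
  have hL0 : L 0 = a := by simp [hL]
  have hL1 : L 1 = b := by simp [hL, hu0]
  have hLl : L ℓ = a := by simp [hL, hℓdef, hun]
  have hLadm : ∀ m < ℓ, A (L m) (L (m + 1)) = true := by
    intro m hm
    match m with
    | 0 => simpa [hL, hu0] using hab
    | (m + 1) =>
      have : m < n := by omega
      simpa [hL] using hadm m this
  refine ⟨ℓ, by omega, fun m => L (m % ℓ), ?_, ?_, ?_, ?_⟩
  · simpa using hL0
  · show L (1 % ℓ) = b
    rw [Nat.mod_eq_of_lt (by omega)]; exact hL1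
  · intro m
    show L ((m + ℓ) % ℓ) = L (m % ℓ)
    rw [Nat.add_mod_right]
  · intro m
    show A (L (m % ℓ)) (L ((m + 1) % ℓ)) = true
    have hm : m % ℓ < ℓ := Nat.mod_lt _ (by omega)
    have key : (m + 1) % ℓ = (m % ℓ + 1) % ℓ := by
      conv_lhs => rw [Nat.add_mod]
      rw [Nat.mod_eq_of_lt (show 1 < ℓ by omega)]
    rcases eq_or_lt_of_le (Nat.succ_le_of_lt hm) with he | hlt
    · have he' : m % ℓ + 1 = ℓ := he
      have h2 : L ((m + 1) % ℓ) = L (m % ℓ + 1) := by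
        rw [key, he', Nat.mod_self, hL0, hLl]
      rw [h2]
      exact hLadm _ hm
    · have hlt' : m % ℓ + 1 < ℓ := hlt
      rw [key, Nat.mod_eq_of_lt hlt']
      exact hLadm _ hm

lemma int_div_mod_step (N : ℕ) (hN : 1 ≤ N) (k : ℤ) :
    ((k + 1) / (N:ℤ) = k / N ∧ (k + 1) % (N:ℤ) = k % N + 1) ∨
    (k % (N:ℤ) = (N:ℤ) - 1 ∧ (k + 1) / (N:ℤ) = k / N + 1 ∧ (k + 1) % (N:ℤ) = 0) := by
  have hN' : (0:ℤ) < N := by exact_mod_cast hN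
  have h0 : 0 ≤ k % (N:ℤ) := Int.emod_nonneg k hN'.ne'
  have h1 : k % (N:ℤ) < N := Int.emod_lt_of_pos k hN'
  have heq : (N:ℤ) * (k / N) + k % N = k := Int.mul_ediv_add_emod k N
  rcases lt_or_ge (k % (N:ℤ) + 1) N with hc | hc
  · left
    have hk1 : k + 1 = (k % (N:ℤ) + 1) + (N:ℤ) * (k / N) := by linarith
    constructor
    · rw [hk1, Int.add_mul_ediv_left _ _ hN'.ne',
        Int.ediv_eq_zero_of_lt (by linarith) hc, zero_add]
    · rw [hk1, Int.add_mul_emod_self_left, Int.emod_eq_of_lt (by linarith) hc]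
  · right
    have he : k % (N:ℤ) = (N:ℤ) - 1 := by omega
    have hk1 : k + 1 = (N:ℤ) * (k / N + 1) := by rw [mul_add, mul_one]; linarith
    refine ⟨he, ?_, ?_⟩
    · rw [hk1, Int.mul_ediv_cancel_left _ hN'.ne']
    · rw [hk1, Int.mul_emod_right]

lemma int_div_mod_addN (N : ℕ) (hN : 1 ≤ N) (k : ℤ) :
    (k + N) / (N:ℤ) = k / N + 1 ∧ (k + N) % (N:ℤ) = k % N := by
  have hN' : (0:ℤ) < N := by exact_mod_cast hN
  have h : k + (N:ℤ) = k + (N:ℤ) * 1 := by ring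
  constructor
  · rw [h, Int.add_mul_ediv_left _ _ hN'.ne']
  · rw [h, Int.add_mul_emod_self_left]

lemma int_div_mod_one (N : ℕ) (hN : 2 ≤ N) (j : ℤ) :
    (j * N + 1) / (N:ℤ) = j ∧ (j * N + 1) % (N:ℤ) = 1 := by
  have hN' : (0:ℤ) < N := by exact_mod_cast (by omega : 0 < N)
  have h : j * (N:ℤ) + 1 = 1 + (N:ℤ) * j := by ring
  have h2 : (1:ℤ) < N := by exact_mod_cast hN
  constructor
  · rw [h, Int.add_mul_ediv_left _ _ hN'.ne',
      Int.ediv_eq_zero_of_lt (by norm_num) h2, zero_add]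
  · rw [h, Int.add_mul_emod_self_left, Int.emod_eq_of_lt (by norm_num) h2]

/-- An infinite transitive subshift of finite type contains, for some `N ≥ 1`, a compact
invariant set on which the `N`-th power of the shift is topologically conjugate to the
full shift on two symbols. -/
theorem sft_contains_full_two_shift
    (p : ℕ) (hp : 1 ≤ p) (A : Fin p → Fin p → Bool)
    (hA : MatIrreducible A) (hinf : (SubshiftSFT A).Infinite) :
    ∃ N : ℕ, 1 ≤ N ∧ ∃ K₀ : Set (ℤ → Fin p),
      K₀.Nonempty ∧ IsCompact K₀ ∧ K₀ ⊆ SubshiftSFT A ∧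
      shiftSeq^[N] '' K₀ = K₀ ∧
      ∃ φ : (ℤ → Fin 2) → (ℤ → Fin p),
        Topology.IsEmbedding φ ∧ Set.range φ = K₀ ∧
        ∀ u : ℤ → Fin 2, shiftSeq^[N] (φ u) = φ (shiftSeq u) := by
  obtain ⟨a, b, b', hbb, hab, hab'⟩ := exists_two_successors p A hA hinf
  obtain ⟨ℓ₀, hℓ₀, V₀, hV00, hV01, hV0per, hV0adm⟩ := mkPeriodicLoop A hA a b hab
  obtain ⟨ℓ₁, hℓ₁, V₁, hV10, hV11, hV1per, hV1adm⟩ := mkPeriodicLoop A hA a b' hab'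
  set N := ℓ₀ * ℓ₁ with hNdef
  have hN2 : 2 ≤ N := le_trans hℓ₀ (Nat.le_mul_of_pos_right ℓ₀ (by omega))
  have hN1 : 1 ≤ N := by omega
  have hmul : ∀ (V : ℕ → Fin p) (ℓ : ℕ), (∀ m, V (m + ℓ) = V m) → ∀ c, V (c * ℓ) = V 0 := by
    intro V ℓ hper c
    induction c with
    | zero => simp
    | succ c ih => rw [show (c + 1) * ℓ = c * ℓ + ℓ by ring, hper, ih]
  set W : Fin 2 → ℕ → Fin p := fun i => if i = 0 then V₀ else V₁ with hW
  have hW0 : ∀ i, W i 0 = a := by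
    intro i; fin_cases i <;> simp [hW, hV00, hV10]
  have hWN : ∀ i, W i N = a := by
    intro i; fin_cases i
    · show V₀ N = a
      rw [hNdef, mul_comm, hmul V₀ ℓ₀ hV0per ℓ₁, hV00]
    · show V₁ N = a
      rw [hNdef, hmul V₁ ℓ₁ hV1per ℓ₀, hV10]
  have hWadm : ∀ i m, A (W i m) (W i (m + 1)) = true := by
    intro i m; fin_cases i
    · exact hV0adm m
    · exact hV1adm m
  have hW01 : W 0 1 = b := by simp [hW, hV01]
  have hW11 : W 1 1 = b' := by simp [hW, hV11]
  set φ : (ℤ → Fin 2) → (ℤ → Fin p) :=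
    fun u k => W (u (k / (N:ℤ))) ((k % (N:ℤ)).toNat) with hφ
  have hN0' : (0:ℤ) < N := by exact_mod_cast hN1
  -- membership in the subshift
  have hmem : ∀ u, φ u ∈ SubshiftSFT A := by
    intro u k
    have h0 : 0 ≤ k % (N:ℤ) := Int.emod_nonneg k hN0'.ne'
    have h1 : k % (N:ℤ) < N := Int.emod_lt_of_pos k hN0'
    show A (W (u (k / (N:ℤ))) ((k % (N:ℤ)).toNat))
        (W (u ((k + 1) / (N:ℤ))) (((k + 1) % (N:ℤ)).toNat)) = true
    rcases int_div_mod_step N hN1 k with ⟨hd, hm⟩ | ⟨hr, hd, hm⟩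
    · rw [hd, hm, show (k % (N:ℤ) + 1).toNat = (k % (N:ℤ)).toNat + 1 by omega]
      exact hWadm _ _
    · rw [hd, hm, hr, show ((N:ℤ) - 1).toNat = N - 1 by omega,
        show ((0:ℤ)).toNat = 0 from rfl, hW0]
      have := hWadm (u (k / (N:ℤ))) (N - 1)
      rw [show N - 1 + 1 = N by omega, hWN] at this
      exact this
  -- equivariance
  have hequiv : ∀ u, shiftSeq^[N] (φ u) = φ (shiftSeq u) := by
    intro u
    funext k
    rw [shiftSeq_iterate]
    obtain ⟨hd, hm⟩ := int_div_mod_addN N hN1 k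
    show W (u ((k + (N:ℤ)) / (N:ℤ))) (((k + (N:ℤ)) % (N:ℤ)).toNat)
        = W (shiftSeq u (k / (N:ℤ))) ((k % (N:ℤ)).toNat)
    rw [hd, hm]
    rfl
  -- injectivity
  have hinj : Function.Injective φ := by
    intro u v huv
    funext j
    have hj := congrFun huv (j * (N:ℤ) + 1)
    obtain ⟨hd, hm⟩ := int_div_mod_one N hN2 j
    simp only [hφ, hd, hm] at hj
    have hj' : W (u j) 1 = W (v j) 1 := hj
    have hWinj : ∀ x y : Fin 2, W x 1 = W y 1 → x = y := by
      intro x y h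
      fin_cases x <;> fin_cases y
      · rfl
      · exact absurd (hW01 ▸ hW11 ▸ h) hbb
      · exact absurd (hW01 ▸ hW11 ▸ h.symm) hbb
      · rfl
    exact hWinj _ _ hj'
  -- continuity
  have hcont : Continuous φ := by
    apply continuous_pi
    intro k
    exact (continuous_of_discreteTopology
      (f := fun x : Fin 2 => W x ((k % (N:ℤ)).toNat))).comp (continuous_apply (k / (N:ℤ)))
  have hK0inv : shiftSeq^[N] '' Set.range φ = Set.range φ := by
    apply Set.Subset.antisymm
    · rintro x ⟨y, ⟨u, rfl⟩, rfl⟩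
      exact ⟨shiftSeq u, (hequiv u).symm⟩
    · rintro x ⟨u, rfl⟩
      refine ⟨φ (fun k => u (k - 1)), ⟨fun k => u (k - 1), rfl⟩, ?_⟩
      refine (hequiv (fun k => u (k - 1))).trans ?_
      have hsu : shiftSeq (fun k => u (k - 1)) = u := by
        funext k
        show u (k + 1 - 1) = u k
        congr 1
        ring
      rw [hsu]
  refine ⟨N, hN1, Set.range φ, ⟨φ (fun _ => 0), ⟨fun _ => 0, rfl⟩⟩,
    isCompact_range hcont, ?_, hK0inv, φ, ?_, rfl, hequiv⟩
  · rintro x ⟨u, rfl⟩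
    exact hmem u
  · exact (hcont.isClosedEmbedding hinj).toIsEmbedding
end
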